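/- Let B ≥ 2, let E be a B×B equi-transmitting matrix in standard form, let κ ∈ ℝ, and let P(κ) = diag(e^{iκ}, 1, …, 1). Let y_± ∈ ℂ^B be the vector whose first component is ±√(B−1) and whose remaining B−1 components all equal 1. Then P(κ)·E·P(κ)·y_± = ±e^{iκ}·y_±. Moreover, every eigenvector of P(κ)·E·P(κ) whose eigenvalue differs from both e^{iκ} and −e^{iκ} is an eigenvector of E; consequently, if +e^{iκ} (respectively −e^{iκ}) is not an eigenvalue of E, then it is a simple eigenvalue of P(κ)·E·P(κ) with eigenspace spanned by y_+ (respectively y_−). -/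

import Mathlib

open Matrix

noncomputable section

/-- A `B × B` matrix is *equi-transmitting in standard form* if it is unitary,
has zero diagonal, all off-diagonal entries of absolute value `1/√(B-1)`,
and all off-diagonal entries in the first row and first column equal to
`1/√(B-1)`. -/
def IsEquiTransStd {B : ℕ} (E : Matrix (Fin B) (Fin B) ℂ) : Prop :=
  E ∈ Matrix.unitaryGroup (Fin B) ℂ ∧
  (∀ i, E i i = 0) ∧
  (∀ i j, i ≠ j → ‖E i j‖ = 1 / Real.sqrt ((B : ℝ) - 1)) ∧
  (∀ i j : Fin B, ((i : ℕ) = 0 ∨ (j : ℕ) = 0) → i ≠ j →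
    E i j = ((1 / Real.sqrt ((B : ℝ) - 1) : ℝ) : ℂ))

/-- `P(κ) = diag(e^{iκ}, 1, …, 1)`. -/
def Pmat (B : ℕ) (κ : ℝ) : Matrix (Fin B) (Fin B) ℂ :=
  Matrix.diagonal fun m => if (m : ℕ) = 0 then Complex.exp (Complex.I * κ) else 1

/-- The vector `y_±` (sign `ε = ±1`): first component `± √(B−1)`, all other
components `1`. -/
def yvec (B : ℕ) (ε : ℝ) : Fin B → ℂ := fun m =>
  if (m : ℕ) = 0 then ((ε * Real.sqrt ((B : ℝ) - 1) : ℝ) : ℂ) else 1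

/-- `y_±` are eigenvectors of `P(κ) E P(κ)` with eigenvalues
`± e^{iκ}`; every other eigenvector of `P(κ) E P(κ)` is an eigenvector of `E`;
and if `± e^{iκ}` is not an eigenvalue of `E` then it is a simple eigenvalue
of `P(κ) E P(κ)` with eigenspace spanned by `y_±`. -/
theorem equitransmitting_perturbed_eigenvectors (B : ℕ) (hB : 2 ≤ B)
    (E : Matrix (Fin B) (Fin B) ℂ) (hE : IsEquiTransStd E) (κ : ℝ) :
    (∀ ε : ℝ, ε = 1 ∨ ε = -1 →
      (Pmat B κ * E * Pmat B κ).mulVec (yvec B ε) =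
        ((ε : ℂ) * Complex.exp (Complex.I * κ)) • yvec B ε) ∧
    (∀ (x : Fin B → ℂ) (μ : ℂ), x ≠ 0 →
      (Pmat B κ * E * Pmat B κ).mulVec x = μ • x →
      μ ≠ Complex.exp (Complex.I * κ) → μ ≠ -Complex.exp (Complex.I * κ) →
      ∃ c : ℂ, E.mulVec x = c • x) ∧
    (∀ ε : ℝ, ε = 1 ∨ ε = -1 →
      (¬ ∃ x : Fin B → ℂ, x ≠ 0 ∧
          E.mulVec x = ((ε : ℂ) * Complex.exp (Complex.I * κ)) • x) →
      Module.End.eigenspace (Pmat B κ * E * Pmat B κ).mulVecLin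
          ((ε : ℂ) * Complex.exp (Complex.I * κ)) =
        Submodule.span ℂ {yvec B ε} ∧
      Module.finrank ℂ
        (Module.End.eigenspace (Pmat B κ * E * Pmat B κ).mulVecLin
          ((ε : ℂ) * Complex.exp (Complex.I * κ))) = 1) := by
  obtain ⟨hU, hdiag, _habs, hstd⟩ := hE
  have hBpos : 0 < B := by omega
  set e : ℂ := Complex.exp (Complex.I * κ) with he
  have he0 : e ≠ 0 := by rw [he]; exact Complex.exp_ne_zero _
  set z : Fin B := ⟨0, hBpos⟩ with hzdef
  have hzval : (z : ℕ) = 0 := by rw [hzdef]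
  set sqR : ℝ := Real.sqrt ((B : ℝ) - 1) with hsqRdef
  have hB1 : (1 : ℝ) ≤ (B : ℝ) - 1 := by
    have : (2 : ℝ) ≤ (B : ℝ) := by exact_mod_cast hB
    linarith
  have hsqRpos : 0 < sqR := by rw [hsqRdef]; exact Real.sqrt_pos.mpr (by linarith)
  have hsqsqR : sqR * sqR = (B : ℝ) - 1 := by
    rw [hsqRdef]; exact Real.mul_self_sqrt (by linarith)
  set sq : ℂ := (sqR : ℂ) with hsqdef
  have hsq0 : sq ≠ 0 := by
    rw [hsqdef]; exact_mod_cast hsqRpos.ne'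
  set r : ℂ := ((1 / sqR : ℝ) : ℂ) with hrdef
  have hrs : r * sq = 1 := by
    rw [hrdef, hsqdef, ← Complex.ofReal_mul]
    rw [one_div, inv_mul_cancel₀ hsqRpos.ne']
    exact Complex.ofReal_one
  have hr0 : r ≠ 0 := by
    intro h; rw [h, zero_mul] at hrs; exact zero_ne_one hrs
  have hsqsq : sq * sq = (B : ℂ) - 1 := by
    rw [hsqdef, ← Complex.ofReal_mul, hsqsqR]; push_cast; ring
  have hstar_r : star r = r := by rw [hrdef]; exact Complex.conj_ofReal _
  -- entries of E on first row/column
  have hErow0 : ∀ n, n ≠ z → E z n = r := by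
    intro n hn
    rw [hstd z n (Or.inl hzval) (Ne.symm hn), hrdef, hsqRdef]
  have hEcol0 : ∀ m, m ≠ z → E m z = r := by
    intro m hm
    rw [hstd m z (Or.inr hzval) hm, hrdef, hsqRdef]
  -- constant sums over the erased set
  have hconst : ∀ c : ℂ, ∑ _n ∈ Finset.univ.erase z, c = ((B : ℂ) - 1) * c := by
    intro c
    rw [Finset.sum_const, Finset.card_erase_of_mem (Finset.mem_univ z),
      Finset.card_univ, Fintype.card_fin, nsmul_eq_mul,
      Nat.cast_sub (by omega : 1 ≤ B), Nat.cast_one]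
  have hBr : ((B : ℂ) - 1) * r = sq := by
    rw [← hsqsq, mul_assoc, mul_comm sq r, hrs, mul_one]
  -- row and column sums from unitarity
  have hrowsum : ∀ m, m ≠ z → ∑ n ∈ Finset.univ.erase z, E m n = 0 := by
    intro m hm
    have h1 : E * star E = 1 := Matrix.mem_unitaryGroup_iff.mp hU
    have h2 : (E * star E) m z = 0 := by
      rw [h1, Matrix.one_apply_ne hm]
    rw [Matrix.mul_apply] at h2
    rw [← Finset.add_sum_erase _ (fun n => E m n * (star E) n z)
      (Finset.mem_univ z)] at h2
    have hzz : (star E) z z = 0 := by rw [Matrix.star_apply, hdiag]; simp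
    rw [hzz, mul_zero, zero_add] at h2
    have hterm : ∀ n ∈ Finset.univ.erase z, E m n * (star E) n z = E m n * r := by
      intro n hn
      rw [Matrix.star_apply, hErow0 n (Finset.ne_of_mem_erase hn), hstar_r]
    rw [Finset.sum_congr rfl hterm, ← Finset.sum_mul] at h2
    rcases mul_eq_zero.mp h2 with h | h
    · exact h
    · exact absurd h hr0
  have hcolsum : ∀ n, n ≠ z → ∑ m ∈ Finset.univ.erase z, E m n = 0 := by
    intro n hn
    have h1 : star E * E = 1 := Matrix.mem_unitaryGroup_iff'.mp hU
    have h2 : (star E * E) z n = 0 := by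
      rw [h1, Matrix.one_apply_ne (Ne.symm hn)]
    rw [Matrix.mul_apply] at h2
    rw [← Finset.add_sum_erase _ (fun m => (star E) z m * E m n)
      (Finset.mem_univ z)] at h2
    have hzz : (star E) z z = 0 := by rw [Matrix.star_apply, hdiag]; simp
    rw [hzz, zero_mul, zero_add] at h2
    have hterm : ∀ m ∈ Finset.univ.erase z, (star E) z m * E m n = r * E m n := by
      intro m hm
      rw [Matrix.star_apply, hEcol0 m (Finset.ne_of_mem_erase hm), hstar_r]
    rw [Finset.sum_congr rfl hterm, ← Finset.mul_sum] at h2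
    rcases mul_eq_zero.mp h2 with h | h
    · exact absurd h hr0
    · exact h
  -- componentwise formula for the perturbed matrix action
  have hMv : ∀ (x : Fin B → ℂ) (m : Fin B),
      (Pmat B κ * E * Pmat B κ).mulVec x m =
        (if m = z then e else 1) *
          (E m z * (e * x z) + ∑ n ∈ Finset.univ.erase z, E m n * x n) := by
    intro x m
    have hent : ∀ n, (Pmat B κ * E * Pmat B κ) m n =
        (if m = z then e else 1) * E m n * (if n = z then e else 1) := by
      intro n
      have hcond : ∀ k : Fin B, ((k : ℕ) = 0) = (k = z) := by
        intro k
        apply propext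
        constructor
        · intro h; exact Fin.ext (by rw [h, hzval])
        · intro h; rw [h, hzval]
      simp only [Pmat, Matrix.mul_diagonal, Matrix.diagonal_mul, ← he, hcond]
    have hdef : (Pmat B κ * E * Pmat B κ).mulVec x m =
        ∑ n, (Pmat B κ * E * Pmat B κ) m n * x n := rfl
    rw [hdef]
    calc ∑ n, (Pmat B κ * E * Pmat B κ) m n * x n
        = ∑ n, (if m = z then e else 1) * (E m n * ((if n = z then e else 1) * x n)) := by
          apply Finset.sum_congr rfl; intro n _; rw [hent n]; ring
      _ = (if m = z then e else 1) * ∑ n, E m n * ((if n = z then e else 1) * x n) := by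
          rw [Finset.mul_sum]
      _ = (if m = z then e else 1) * (E m z * ((if z = z then e else 1) * x z) +
            ∑ n ∈ Finset.univ.erase z, E m n * ((if n = z then e else 1) * x n)) := by
          rw [← Finset.add_sum_erase _ (fun n => E m n * ((if n = z then e else 1) * x n))
            (Finset.mem_univ z)]
      _ = (if m = z then e else 1) *
            (E m z * (e * x z) + ∑ n ∈ Finset.univ.erase z, E m n * x n) := by
          rw [if_pos rfl]
          congr 1
          congr 1
          apply Finset.sum_congr rfl
          intro n hn
          rw [if_neg (Finset.ne_of_mem_erase hn), one_mul]
  -- values of yvec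
  have hy_z : ∀ ε : ℝ, yvec B ε z = (ε : ℂ) * sq := by
    intro ε
    show (if (z : ℕ) = 0 then ((ε * Real.sqrt ((B : ℝ) - 1) : ℝ) : ℂ) else 1) = (ε : ℂ) * sq
    rw [if_pos hzval, ← hsqRdef, hsqdef, Complex.ofReal_mul]
  have hy_ne : ∀ (ε : ℝ) (n : Fin B), n ≠ z → yvec B ε n = 1 := by
    intro ε n hn
    have hn0 : ¬ ((n : ℕ) = 0) := fun h => hn (Fin.ext (by rw [h, hzval]))
    show (if (n : ℕ) = 0 then _ else (1:ℂ)) = 1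
    rw [if_neg hn0]
  -- Part 1
  have part1 : ∀ ε : ℝ, ε = 1 ∨ ε = -1 →
      (Pmat B κ * E * Pmat B κ).mulVec (yvec B ε) = ((ε : ℂ) * e) • yvec B ε := by
    intro ε hε
    have hε2 : (ε : ℂ) * (ε : ℂ) = 1 := by rcases hε with h | h <;> simp [h]
    funext m
    rw [hMv (yvec B ε) m, Pi.smul_apply, smul_eq_mul]
    by_cases hm : m = z
    · subst hm
      rw [if_pos rfl, hdiag z, zero_mul, zero_add, hy_z ε]
      have hsum : ∑ n ∈ Finset.univ.erase z, E z n * yvec B ε n = sq := by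
        have hterm : ∀ n ∈ Finset.univ.erase z, E z n * yvec B ε n = r := by
          intro n hn
          rw [hErow0 n (Finset.ne_of_mem_erase hn), hy_ne ε n (Finset.ne_of_mem_erase hn),
            mul_one]
        rw [Finset.sum_congr rfl hterm, hconst r, hBr]
      rw [hsum]
      calc e * sq = ((ε:ℂ) * (ε:ℂ)) * (e * sq) := by rw [hε2, one_mul]
        _ = (ε:ℂ) * e * ((ε:ℂ) * sq) := by ring
    · rw [if_neg hm, one_mul, hEcol0 m hm, hy_z ε, hy_ne ε m hm, mul_one]
      have hsum : ∑ n ∈ Finset.univ.erase z, E m n * yvec B ε n = 0 := by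
        have hterm : ∀ n ∈ Finset.univ.erase z, E m n * yvec B ε n = E m n := by
          intro n hn
          rw [hy_ne ε n (Finset.ne_of_mem_erase hn), mul_one]
        rw [Finset.sum_congr rfl hterm]
        exact hrowsum m hm
      rw [hsum, add_zero]
      calc r * (e * ((ε:ℂ) * sq)) = (r * sq) * ((ε:ℂ) * e) := by ring
        _ = (ε:ℂ) * e := by rw [hrs, one_mul]
  -- key lemma: eigenvectors of the perturbed matrix vanishing at 0 with zero tail sum
  -- are eigenvectors of E
  have keylemma : ∀ (x : Fin B → ℂ) (μ : ℂ),
      (Pmat B κ * E * Pmat B κ).mulVec x = μ • x → x z = 0 →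
      (∑ n ∈ Finset.univ.erase z, x n) = 0 → E.mulVec x = μ • x := by
    intro x μ heq hxz hs
    funext m
    have hdefE : E.mulVec x m = ∑ n, E m n * x n := rfl
    rw [Pi.smul_apply, smul_eq_mul]
    by_cases hm : m = z
    · subst hm
      rw [hdefE, ← Finset.add_sum_erase _ (fun n => E z n * x n) (Finset.mem_univ z),
        hdiag z, zero_mul, zero_add]
      have hsum : ∑ n ∈ Finset.univ.erase z, E z n * x n =
          r * ∑ n ∈ Finset.univ.erase z, x n := by
        rw [Finset.mul_sum]
        apply Finset.sum_congr rfl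
        intro n hn
        rw [hErow0 n (Finset.ne_of_mem_erase hn)]
      rw [hsum, hs, mul_zero, hxz, mul_zero]
    · have h1 := congrFun heq m
      rw [hMv x m, if_neg hm, one_mul, Pi.smul_apply, smul_eq_mul] at h1
      rw [hxz, mul_zero, mul_zero, zero_add] at h1
      rw [hdefE, ← Finset.add_sum_erase _ (fun n => E m n * x n) (Finset.mem_univ z),
        hxz, mul_zero, zero_add, h1]
  -- Part 2
  have part2 : ∀ (x : Fin B → ℂ) (μ : ℂ), x ≠ 0 →
      (Pmat B κ * E * Pmat B κ).mulVec x = μ • x →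
      μ ≠ e → μ ≠ -e → ∃ c : ℂ, E.mulVec x = c • x := by
    intro x μ _hx0 heq hμ1 hμ2
    have hcomp : ∀ k, (Pmat B κ * E * Pmat B κ).mulVec x k = μ * x k := by
      intro k
      rw [heq, Pi.smul_apply, smul_eq_mul]
    set s : ℂ := ∑ n ∈ Finset.univ.erase z, x n with hsdef
    have h0 : e * (r * s) = μ * x z := by
      have h := hcomp z
      rw [hMv x z, if_pos rfl, hdiag z, zero_mul, zero_add] at h
      rw [← h]
      congr 1
      rw [hsdef, Finset.mul_sum]
      apply Finset.sum_congr rfl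
      intro n hn
      rw [hErow0 n (Finset.ne_of_mem_erase hn)]
    have hsum2 : sq * (e * x z) = μ * s := by
      have hA : ∑ m ∈ Finset.univ.erase z, (Pmat B κ * E * Pmat B κ).mulVec x m =
          ∑ m ∈ Finset.univ.erase z, μ * x m :=
        Finset.sum_congr rfl (fun m _ => hcomp m)
      have hB2 : ∀ m ∈ Finset.univ.erase z, (Pmat B κ * E * Pmat B κ).mulVec x m =
          r * (e * x z) + ∑ n ∈ Finset.univ.erase z, E m n * x n := by
        intro m hm
        rw [hMv x m, if_neg (Finset.ne_of_mem_erase hm), one_mul,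
          hEcol0 m (Finset.ne_of_mem_erase hm), ← mul_assoc, mul_assoc r e (x z)]
      rw [Finset.sum_congr rfl hB2, Finset.sum_add_distrib, hconst (r * (e * x z))] at hA
      have hdouble : ∑ m ∈ Finset.univ.erase z, ∑ n ∈ Finset.univ.erase z, E m n * x n = 0 := by
        rw [Finset.sum_comm]
        apply Finset.sum_eq_zero
        intro n hn
        rw [← Finset.sum_mul, hcolsum n (Finset.ne_of_mem_erase hn), zero_mul]
      rw [hdouble, add_zero, ← Finset.mul_sum, ← hsdef] at hA
      calc sq * (e * x z) = ((B:ℂ) - 1) * (r * (e * x z)) := by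
            rw [← hBr]; ring
        _ = μ * s := hA
    have hxz : x z = 0 := by
      by_contra hne
      have h2 : μ * (e * (r * s)) = e * e * x z := by
        calc μ * (e * (r * s)) = e * r * (μ * s) := by ring
          _ = e * r * (sq * (e * x z)) := by rw [hsum2]
          _ = (r * sq) * (e * (e * x z)) := by ring
          _ = e * e * x z := by rw [hrs]; ring
      have h3 : (μ * μ - e * e) * x z = 0 := by
        have h1 : μ * (e * (r * s)) = μ * (μ * x z) := by rw [h0]
        rw [h2] at h1
        linear_combination -h1
      rcases mul_eq_zero.mp h3 with h | h
      · have h4 : (μ - e) * (μ + e) = 0 := by linear_combination h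
        rcases mul_eq_zero.mp h4 with h5 | h5
        · exact hμ1 (sub_eq_zero.mp h5)
        · exact hμ2 (eq_neg_of_add_eq_zero_left h5)
      · exact hne h
    have hs0 : s = 0 := by
      rw [hxz, mul_zero] at h0
      rcases mul_eq_zero.mp h0 with h | h
      · exact absurd h he0
      · rcases mul_eq_zero.mp h with h | h
        · exact absurd h hr0
        · exact h
    exact ⟨μ, keylemma x μ heq hxz hs0⟩
  refine ⟨part1, part2, ?_⟩
  -- Part 3
  intro ε hε hno
  have hεC : (ε : ℂ) ≠ 0 := by rcases hε with h | h <;> simp [h]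
  have hμ := part1 ε hε
  have hyne : yvec B ε ≠ 0 := by
    intro h
    have hw : (⟨1, by omega⟩ : Fin B) ≠ z := by
      intro hc
      have : (1 : ℕ) = 0 := by rw [← hzval, ← hc]
      omega
    have h1 : yvec B ε ⟨1, by omega⟩ = 1 := hy_ne ε _ hw
    rw [h] at h1
    exact one_ne_zero h1.symm
  have hspan : Module.End.eigenspace (Pmat B κ * E * Pmat B κ).mulVecLin ((ε : ℂ) * e) =
      Submodule.span ℂ {yvec B ε} := by
    apply le_antisymm
    · intro x hx
      rw [Module.End.mem_eigenspace_iff] at hx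
      have hx' : (Pmat B κ * E * Pmat B κ).mulVec x = ((ε : ℂ) * e) • x := hx
      set c : ℂ := x z / ((ε : ℂ) * sq) with hc
      set w : Fin B → ℂ := x - c • yvec B ε with hw
      have hwz : w z = 0 := by
        rw [hw]
        simp only [Pi.sub_apply, Pi.smul_apply, smul_eq_mul]
        rw [hy_z ε, hc]
        field_simp
        ring
      have hMw : (Pmat B κ * E * Pmat B κ).mulVec w = ((ε : ℂ) * e) • w := by
        rw [hw, Matrix.mulVec_sub, Matrix.mulVec_smul, hx', hμ]
        module
      have hcw := congrFun hMw z
      rw [hMv w z, if_pos rfl, hdiag z, zero_mul, zero_add,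
        Pi.smul_apply, hwz, smul_zero] at hcw
      have hsw : ∑ n ∈ Finset.univ.erase z, w n = 0 := by
        have hsum : ∑ n ∈ Finset.univ.erase z, E z n * w n =
            r * ∑ n ∈ Finset.univ.erase z, w n := by
          rw [Finset.mul_sum]
          apply Finset.sum_congr rfl
          intro n hn
          rw [hErow0 n (Finset.ne_of_mem_erase hn)]
        rw [hsum] at hcw
        rcases mul_eq_zero.mp hcw with h | h
        · exact absurd h he0
        · rcases mul_eq_zero.mp h with h | h
          · exact absurd h hr0
          · exact h
      have hEw := keylemma w ((ε : ℂ) * e) hMw hwz hsw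
      have hw0 : w = 0 := by
        by_contra hw0
        exact hno ⟨w, hw0, hEw⟩
      rw [Submodule.mem_span_singleton]
      refine ⟨c, ?_⟩
      have : x - c • yvec B ε = 0 := by rw [← hw, hw0]
      exact (sub_eq_zero.mp this).symm
    · apply Submodule.span_le.mpr
      intro v hv
      rw [Set.mem_singleton_iff] at hv
      subst hv
      rw [SetLike.mem_coe, Module.End.mem_eigenspace_iff]
      exact hμ
  refine ⟨hspan, ?_⟩
  rw [hspan]
  exact finrank_span_singleton hyne

end
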